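/- Let C be a real symmetric positive definite p×p matrix with orthogonal diagonalization C = U diag(γ₁,…,γ_p) Uᵀ (U orthogonal, γ_i > 0), and let 0 < τ < 2/max_i γ_i. Then for every real p×p matrix X, the matrix Y := U ((Uᵀ X U) ⊙ K) Uᵀ, where ⊙ is the entrywise (Hadamard) product and K is the p×p matrix with entries K_{ij} = 1/(γ_i + γ_j − τ γ_i γ_j), satisfies L^τ_C[Y] = X; that is, (L^τ_C)^{-1}[X] = U ((Uᵀ X U) ⊙ K) Uᵀ. -/

import Mathlib

open Matrix

/-- The operator `L^τ_C[X] = C X + X Cᵀ − τ C X Cᵀ` on real `p × p` matrices. -/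
noncomputable def Lop {p : ℕ} (τ : ℝ) (C X : Matrix (Fin p) (Fin p) ℝ) :
    Matrix (Fin p) (Fin p) ℝ :=
  C * X + X * Cᵀ - τ • (C * X * Cᵀ)

/-- For `C = U diag(γ) Uᵀ` symmetric positive definite (`U` orthogonal,
`γ i > 0`) and `0 < τ < 2 / max_i γ_i`, the inverse of `L^τ_C` is given by
`(L^τ_C)⁻¹[X] = U ((Uᵀ X U) ⊙ K) Uᵀ` with `K i j = 1 / (γ i + γ j − τ γ i γ j)`,
i.e. `L^τ_C[U ((Uᵀ X U) ⊙ K) Uᵀ] = X`. -/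
theorem lop_inverse_eigenbasis {p : ℕ} (γ : Fin p → ℝ) (hγ : ∀ i, 0 < γ i)
    (U : Matrix (Fin p) (Fin p) ℝ) (hU : U * Uᵀ = 1) (hU' : Uᵀ * U = 1)
    (C : Matrix (Fin p) (Fin p) ℝ) (hC : C = U * Matrix.diagonal γ * Uᵀ)
    (g : ℝ) (hg : IsGreatest (Set.range γ) g)
    (τ : ℝ) (hτ : 0 < τ) (hτ2 : τ < 2 / g)
    (K : Matrix (Fin p) (Fin p) ℝ)
    (hK : ∀ i j, K i j = 1 / (γ i + γ j - τ * (γ i * γ j)))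
    (X : Matrix (Fin p) (Fin p) ℝ) :
    Lop τ C (U * Matrix.hadamard (Uᵀ * X * U) K * Uᵀ) = X := by
  obtain ⟨i0, hi0⟩ := hg.1
  have hg0 : 0 < g := hi0 ▸ hγ i0
  have hτg : τ * g < 2 := by
    rw [lt_div_iff₀ hg0] at hτ2; linarith
  have hden : ∀ i j, γ i + γ j - τ * (γ i * γ j) ≠ 0 := by
    intro i j
    have hi : γ i ≤ g := hg.2 ⟨i, rfl⟩
    have hj : γ j ≤ g := hg.2 ⟨j, rfl⟩
    have h1 : 0 < γ i := hγ i
    have h2 : 0 < γ j := hγ j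
    nlinarith [mul_nonneg (sub_nonneg.2 hi) h2.le, mul_nonneg (sub_nonneg.2 hj) h1.le,
      mul_pos h1 h2, mul_pos (mul_pos h1 h2) hg0]
  have hcancel : ∀ Z : Matrix (Fin p) (Fin p) ℝ, Uᵀ * (U * Z) = Z := fun Z => by
    rw [← Matrix.mul_assoc, hU', Matrix.one_mul]
  set D := Matrix.diagonal γ with hD
  set H := Matrix.hadamard (Uᵀ * X * U) K with hH
  have hCT : Cᵀ = C := by
    rw [hC, hD]; simp [Matrix.transpose_mul, Matrix.mul_assoc]
  have hmain : Lop τ C (U * H * Uᵀ) = U * (D * H + H * D - τ • (D * H * D)) * Uᵀ := by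
    have hDT : Dᵀ = D := by rw [hD]; exact Matrix.diagonal_transpose γ
    simp only [Lop, hCT, hC, Matrix.transpose_mul, Matrix.transpose_transpose, hDT, Matrix.add_mul, Matrix.mul_add, Matrix.sub_mul, Matrix.mul_sub,
      Matrix.mul_smul, Matrix.smul_mul, Matrix.mul_assoc, hcancel]
  have hentry : D * H + H * D - τ • (D * H * D) = Uᵀ * X * U := by
    ext i j
    have hd := hden i j
    simp only [Matrix.sub_apply, Matrix.add_apply, Matrix.smul_apply, hD,
      Matrix.diagonal_mul, Matrix.mul_diagonal, hH, Matrix.hadamard_apply, hK, smul_eq_mul]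
    have key : (γ i + γ j - τ * (γ i * γ j)) * (1 / (γ i + γ j - τ * (γ i * γ j))) = 1 :=
      mul_one_div_cancel hd
    linear_combination (Uᵀ * X * U) i j * key
  rw [hmain, hentry]
  simp only [Matrix.mul_assoc]
  rw [hU, Matrix.mul_one, ← Matrix.mul_assoc, hU, Matrix.one_mul]
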